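/- (Corollary 2.) Under Assumption 1, with E_jk[ε_jk²/π_j(Z)] < ∞ and E_jk[ε_kj²/π_k(Z)] < ∞, let Σ_aipw = diag( E_jk[ε_jk²/π_j(Z)], E_jk[ε_kj²/π_k(Z)] ) + Λ_jk − δδᵀ and Σ_saipw = diag( E_jk[(ε_jk−δ_jk)²/π_j(Z)], E_jk[(ε_kj−δ_kj)²/π_k(Z)] ) + Λ_jk, where δ = (δ_jk, δ_kj)ᵀ and Λ_jk is the 2×2 matrix with diagonal (λ_jk, λ_kj) and both off-diagonal entries c_jk. Then Σ_aipw − Σ_saipw = N₁ + N₂, where N₁ has diagonal entries δ_jk² E_jk[1/π_j(Z) − 1] and δ_kj² E_jk[1/π_k(Z) − 1] and both off-diagonal entries −δ_jk δ_kj, and N₂ = 2 · diag( δ_jk Cov_jk(ε_jk, 1/π_j(Z)), δ_kj Cov_jk(ε_kj, 1/π_k(Z)) ). Moreover, if π_j(Z) + π_k(Z) ≤ 1 almost surely on the ECE event then N₁ is positive semidefinite, and if additionally δ_jk Cov_jk(ε_jk, 1/π_j(Z)) ≥ 0 and δ_kj Cov_jk(ε_kj, 1/π_k(Z)) ≥ 0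 then Σ_aipw − Σ_saipw is positive semidefinite. -/

import Mathlib

open MeasureTheory ProbabilityTheory Filter Set

noncomputable section

/-- Covariance of two real-valued random variables under the measure `μ`. -/
def cov {Ω : Type*} [MeasurableSpace Ω] (μ : Measure Ω) (f g : Ω → ℝ) : ℝ :=
  ∫ ω, (f ω - ∫ x, f x ∂μ) * (g ω - ∫ x, g x ∂μ) ∂μ

lemma cov_eq' {Ω : Type*} [MeasurableSpace Ω] (μ : Measure Ω) [IsProbabilityMeasure μ]
    (f g : Ω → ℝ) (hf : Integrable f μ) (hg : Integrable g μ)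
    (hfg : Integrable (fun ω => f ω * g ω) μ) :
    cov μ f g = (∫ ω, f ω * g ω ∂μ) - (∫ ω, f ω ∂μ) * (∫ ω, g ω ∂μ) := by
  unfold cov
  have h1 : (fun ω => (f ω - ∫ x, f x ∂μ) * (g ω - ∫ x, g x ∂μ))
      = fun ω => f ω * g ω - (∫ x, f x ∂μ) * g ω
        - ((∫ x, g x ∂μ) * f ω - (∫ x, f x ∂μ) * (∫ x, g x ∂μ)) := by
    ext ω; ring
  have hI1 : Integrable (fun ω => f ω * g ω - (∫ x, f x ∂μ) * g ω) μ :=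
    hfg.sub (hg.const_mul _)
  have hI2 : Integrable (fun ω => (∫ x, g x ∂μ) * f ω - (∫ x, f x ∂μ) * (∫ x, g x ∂μ)) μ :=
    (hf.const_mul _).sub (integrable_const _)
  rw [h1, integral_sub hI1 hI2, integral_sub hfg (hg.const_mul _),
    integral_sub (hf.const_mul _) (integrable_const _),
    integral_const_mul, integral_const_mul, integral_const]
  simp [measure_univ]
  ring

lemma scalar_key {Ω : Type*} [MeasurableSpace Ω] (μ : Measure Ω) [IsProbabilityMeasure μ]
    (ε p : Ω → ℝ) (δ : ℝ) (hδ : δ = ∫ ω, ε ω ∂μ)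
    (hε : Integrable ε μ)
    (h2 : Integrable (fun ω => ε ω ^ 2 / p ω) μ)
    (h1 : Integrable (fun ω => 1 / p ω) μ)
    (h0 : Integrable (fun ω => ε ω / p ω) μ) :
    (∫ ω, ε ω ^ 2 / p ω ∂μ) - δ * δ - ∫ ω, (ε ω - δ) ^ 2 / p ω ∂μ
      = δ ^ 2 * (∫ ω, (1 / p ω - 1) ∂μ)
        + 2 * (δ * cov μ ε (fun ω => 1 / p ω)) := by
  have hfun : (fun ω => (ε ω - δ) ^ 2 / p ω)
      = fun ω => ε ω ^ 2 / p ω - (2 * δ) * (ε ω / p ω) + δ ^ 2 * (1 / p ω) := by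
    ext ω
    rcases eq_or_ne (p ω) 0 with h | h
    · simp [h]
    · field_simp
      ring
  have hc : cov μ ε (fun ω => 1 / p ω)
      = (∫ ω, ε ω / p ω ∂μ) - δ * ∫ ω, 1 / p ω ∂μ := by
    rw [cov_eq' μ ε (fun ω => 1 / p ω) hε h1 (by simpa only [mul_one_div] using h0), ← hδ]
    simp only [mul_one_div]
  have hIs : Integrable (fun ω => ε ω ^ 2 / p ω - (2 * δ) * (ε ω / p ω)) μ :=
    h2.sub (h0.const_mul _)
  have hI3 : Integrable (fun ω => δ ^ 2 * (1 / p ω)) μ := h1.const_mul _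
  have hI4 : Integrable (fun ω => (2 * δ) * (ε ω / p ω)) μ := h0.const_mul _
  have hint : ∫ ω, (ε ω - δ) ^ 2 / p ω ∂μ
      = (∫ ω, ε ω ^ 2 / p ω ∂μ) - (2 * δ) * (∫ ω, ε ω / p ω ∂μ)
        + δ ^ 2 * ∫ ω, 1 / p ω ∂μ := by
    rw [hfun, integral_add hIs hI3, integral_sub h2 hI4, integral_const_mul, integral_const_mul]
  have h1' : ∫ ω, (1 / p ω - 1) ∂μ = (∫ ω, 1 / p ω ∂μ) - 1 := by
    rw [integral_sub h1 (integrable_const _), integral_const]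
    simp [measure_univ]
  rw [hint, hc, h1']
  ring

lemma key_ineq {Ω : Type*} [MeasurableSpace Ω] (μ : Measure Ω) [IsProbabilityMeasure μ]
    (pj pk : Ω → ℝ)
    (h1 : Integrable (fun ω => 1 / pj ω) μ) (h2 : Integrable (fun ω => 1 / pk ω) μ)
    (hae : ∀ᵐ ω ∂μ, 0 < pj ω ∧ 0 < pk ω ∧ pj ω + pk ω ≤ 1) (u v : ℝ) :
    2 * (u * v) ≤ u ^ 2 * (∫ ω, (1 / pj ω - 1) ∂μ) + v ^ 2 * ∫ ω, (1 / pk ω - 1) ∂μ := by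
  have hIa : Integrable (fun ω => u ^ 2 * (1 / pj ω - 1)) μ :=
    (h1.sub (integrable_const 1)).const_mul _
  have hIb : Integrable (fun ω => v ^ 2 * (1 / pk ω - 1)) μ :=
    (h2.sub (integrable_const 1)).const_mul _
  have hIab : Integrable (fun ω => u ^ 2 * (1 / pj ω - 1) + v ^ 2 * (1 / pk ω - 1)) μ :=
    hIa.add hIb
  have hnn : 0 ≤ ∫ ω, (u ^ 2 * (1 / pj ω - 1) + v ^ 2 * (1 / pk ω - 1) - 2 * (u * v)) ∂μ := by
    refine integral_nonneg_of_ae ?_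
    filter_upwards [hae] with ω ⟨ha, hb, hab⟩
    simp only [Pi.zero_apply]
    set a := pj ω with hadef
    set b := pk ω with hbdef
    have hba : b / a ≤ 1 / a - 1 := by
      rw [div_le_iff₀ ha, sub_mul, one_div, inv_mul_cancel₀ ha.ne', one_mul]
      linarith
    have hab' : a / b ≤ 1 / b - 1 := by
      rw [div_le_iff₀ hb, sub_mul, one_div, inv_mul_cancel₀ hb.ne', one_mul]
      linarith
    have key : u ^ 2 * (b / a) + v ^ 2 * (a / b) - 2 * (u * v)
        = (u * b - v * a) ^ 2 / (a * b) := by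
      field_simp
      ring
    have h0 : 0 ≤ u ^ 2 * (b / a) + v ^ 2 * (a / b) - 2 * (u * v) := by
      rw [key]
      exact div_nonneg (sq_nonneg _) (mul_pos ha hb).le
    nlinarith [mul_le_mul_of_nonneg_left hba (sq_nonneg u),
      mul_le_mul_of_nonneg_left hab' (sq_nonneg v)]
  rw [integral_sub hIab (integrable_const _), integral_add hIa hIb,
    integral_const_mul, integral_const_mul, integral_const] at hnn
  simp only [measure_univ, probReal_univ, ENNReal.toReal_one, smul_eq_mul, one_mul] at hnn
  linarith

lemma posSemidef_2x2 (A B C : ℝ)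
    (h : ∀ x y : ℝ, 2 * (x * y * C) ≤ x ^ 2 * A + y ^ 2 * B) :
    Matrix.PosSemidef !![A, -C; -C, B] := by
  rw [Matrix.posSemidef_iff_dotProduct_mulVec]
  constructor
  · ext i j
    fin_cases i <;> fin_cases j <;> simp [Matrix.conjTranspose_apply]
  · intro x
    have hx := h (x 0) (x 1)
    simp [Matrix.mulVec, dotProduct, Fin.sum_univ_two]
    nlinarith [hx]

lemma posSemidef_diag2 (A B : ℝ) (hA : 0 ≤ A) (hB : 0 ≤ B) :
    Matrix.PosSemidef !![A, 0; 0, B] := by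
  rw [Matrix.posSemidef_iff_dotProduct_mulVec]
  constructor
  · ext i j
    fin_cases i <;> fin_cases j <;> simp [Matrix.conjTranspose_apply]
  · intro x
    simp [Matrix.mulVec, dotProduct, Fin.sum_univ_two]
    nlinarith [mul_nonneg hA (sq_nonneg (x 0)), mul_nonneg hB (sq_nonneg (x 1))]

/-- Corollary 2: decomposition of Σ_aipw − Σ_saipw and positive
semidefiniteness. -/
theorem stmt_13
    {Ω 𝓩 𝓦 : Type*} [MeasurableSpace Ω] [StandardBorelSpace Ω]
    [MeasurableSpace 𝓩] [MeasurableSpace 𝓦]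
    (P : Measure Ω) [IsProbabilityMeasure P]
    {J : ℕ} (Z : Ω → 𝓩) (W : Ω → 𝓦) (A : Ω → Fin J) (Y : Fin J → Ω → ℝ)
    (hZ : Measurable Z) (hW : Measurable W) (hA : Measurable A)
    (hY : ∀ m, Measurable (Y m)) (hY2 : ∀ m, MemLp (Y m) 2 P)
    (π : Fin J → 𝓩 → ℝ) (hπmeas : ∀ m, Measurable (π m))
    (hπ01 : ∀ m z, π m z ∈ Set.Icc (0:ℝ) 1)
    (hπsum : ∀ z, ∑ m, π m z = 1)
    -- Assumption 1: A ⟂ (W, Y^(1),…,Y^(J)) given Z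
    (hCI : CondIndepFun (MeasurableSpace.comap Z inferInstance) hZ.comap_le A
        (fun ω => (W ω, fun m => Y m ω)) P)
    -- Assumption 1: P(A = m | Z) = π_m(Z) a.s.
    (hprop : ∀ m : Fin J,
      (P[ Set.indicator {ω' | A ω' = m} (fun _ => (1:ℝ)) | MeasurableSpace.comap Z inferInstance])
        =ᵐ[P] fun ω => π m (Z ω))
    (j k : Fin J) (hjk : j ≠ k)
    -- the ECE event, with positive probability
    (ECE : Set Ω) (hECE : ECE = {ω | 0 < π j (Z ω) ∧ 0 < π k (Z ω)})
    (hECEpos : P ECE ≠ 0)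
    -- working model: a covariate sub-vector X of W and a function μjk of X
    {𝓧 : Type*} [MeasurableSpace 𝓧]
    (X : Ω → 𝓧) (hXW : ∃ g : 𝓦 → 𝓧, Measurable g ∧ ∀ ω, X ω = g (W ω))
    (μjk : 𝓧 → ℝ) (hμjkm : Measurable μjk) (hμjk2 : MemLp (fun ω => μjk (X ω)) 2 P)
    (μkj : 𝓧 → ℝ) (hμkjm : Measurable μkj) (hμkj2 : MemLp (fun ω => μkj (X ω)) 2 P)
    -- residuals, δ's, λ's and c_jk
    (εjk εkj : Ω → ℝ)
    (hεjk : ∀ ω, εjk ω = Y j ω - μjk (X ω)) (hεkj : ∀ ω, εkj ω = Y k ω - μkj (X ω))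
    (δjk δkj : ℝ)
    (hδjk : δjk = ∫ ω, εjk ω ∂P[|ECE]) (hδkj : δkj = ∫ ω, εkj ω ∂P[|ECE])
    (lamjk lamkj : ℝ)
    (hlamjk : lamjk = variance (Y j) P[|ECE] - variance εjk P[|ECE])
    (hlamkj : lamkj = variance (Y k) P[|ECE] - variance εkj P[|ECE])
    (cjk : ℝ) (hcjk : cjk = cov P[|ECE] (Y j) (Y k) - cov P[|ECE] εjk εkj)
    -- finiteness of the displayed conditional moments
    (hIntj : Integrable (fun ω => εjk ω ^ 2 / π j (Z ω)) P[|ECE])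
    (hIntk : Integrable (fun ω => εkj ω ^ 2 / π k (Z ω)) P[|ECE])
    (hIntj1 : Integrable (fun ω => 1 / π j (Z ω)) P[|ECE])
    (hIntk1 : Integrable (fun ω => 1 / π k (Z ω)) P[|ECE])
    (hIntjε : Integrable (fun ω => εjk ω / π j (Z ω)) P[|ECE])
    (hIntkε : Integrable (fun ω => εkj ω / π k (Z ω)) P[|ECE])
    -- the matrices
    (Λjk Saipw Ssaipw N₁ N₂ : Matrix (Fin 2) (Fin 2) ℝ)
    (hΛjk : Λjk = !![lamjk, cjk; cjk, lamkj])
    (hSaipw : Saipw =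
      !![∫ ω, εjk ω ^ 2 / π j (Z ω) ∂P[|ECE], 0;
         0, ∫ ω, εkj ω ^ 2 / π k (Z ω) ∂P[|ECE]]
      + Λjk - !![δjk * δjk, δjk * δkj; δkj * δjk, δkj * δkj])
    (hSsaipw : Ssaipw =
      !![∫ ω, (εjk ω - δjk) ^ 2 / π j (Z ω) ∂P[|ECE], 0;
         0, ∫ ω, (εkj ω - δkj) ^ 2 / π k (Z ω) ∂P[|ECE]]
      + Λjk)
    (hN₁ : N₁ =
      !![δjk ^ 2 * ∫ ω, (1 / π j (Z ω) - 1) ∂P[|ECE], -(δjk * δkj);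
         -(δjk * δkj), δkj ^ 2 * ∫ ω, (1 / π k (Z ω) - 1) ∂P[|ECE]])
    (hN₂ : N₂ =
      !![2 * (δjk * cov P[|ECE] εjk (fun ω => 1 / π j (Z ω))), 0;
         0, 2 * (δkj * cov P[|ECE] εkj (fun ω => 1 / π k (Z ω)))]) :
    Saipw - Ssaipw = N₁ + N₂
    ∧ ((∀ᵐ ω ∂P[|ECE], π j (Z ω) + π k (Z ω) ≤ 1) → N₁.PosSemidef)
    ∧ ((∀ᵐ ω ∂P[|ECE], π j (Z ω) + π k (Z ω) ≤ 1) →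
        0 ≤ δjk * cov P[|ECE] εjk (fun ω => 1 / π j (Z ω)) →
        0 ≤ δkj * cov P[|ECE] εkj (fun ω => 1 / π k (Z ω)) →
        (Saipw - Ssaipw).PosSemidef)   := by
  classical
  -- ECE is measurable
  have hECEmeas : MeasurableSet ECE := by
    rw [hECE]
    exact (measurableSet_lt measurable_const ((hπmeas j).comp hZ)).inter
      (measurableSet_lt measurable_const ((hπmeas k).comp hZ))
  haveI : IsProbabilityMeasure P[|ECE] := cond_isProbabilityMeasure hECEpos
  -- residuals are integrable under the conditional measure
  have hεjkP : Integrable εjk P := by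
    have h1 : Integrable (fun ω => Y j ω - μjk (X ω)) P :=
      ((hY2 j).integrable one_le_two).sub (hμjk2.integrable one_le_two)
    exact h1.congr (ae_of_all _ fun ω => (hεjk ω).symm)
  have hεkjP : Integrable εkj P := by
    have h1 : Integrable (fun ω => Y k ω - μkj (X ω)) P :=
      ((hY2 k).integrable one_le_two).sub (hμkj2.integrable one_le_two)
    exact h1.congr (ae_of_all _ fun ω => (hεkj ω).symm)
  have hεjkInt : Integrable εjk P[|ECE] :=
    (hεjkP.restrict (s := ECE)).smul_measure (ENNReal.inv_ne_top.mpr hECEpos)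
  have hεkjInt : Integrable εkj P[|ECE] :=
    (hεkjP.restrict (s := ECE)).smul_measure (ENNReal.inv_ne_top.mpr hECEpos)
  -- a.e. membership in ECE under the conditional measure
  have hmem : ∀ᵐ ω ∂P[|ECE], ω ∈ ECE :=
    Measure.ae_smul_measure (ae_restrict_mem hECEmeas) _
  -- the two scalar identities
  have id1 := scalar_key P[|ECE] εjk (fun ω => π j (Z ω)) δjk hδjk hεjkInt hIntj hIntj1 hIntjε
  have id2 := scalar_key P[|ECE] εkj (fun ω => π k (Z ω)) δkj hδkj hεkjInt hIntk hIntk1 hIntkε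
  -- the matrix decomposition
  have heq : Saipw - Ssaipw = N₁ + N₂ := by
    rw [hSaipw, hSsaipw, hN₁, hN₂, hΛjk]
    simp only [one_div] at id1 id2
    beta_reduce at id1 id2
    ext i i'
    fin_cases i <;> fin_cases i' <;>
      simp only [Fin.mk_zero, Fin.mk_one, Fin.isValue, Matrix.sub_apply, Matrix.add_apply,
        Matrix.cons_val', Matrix.cons_val_zero, Matrix.cons_val_one, Matrix.head_cons,
        Matrix.empty_val', Matrix.cons_val_fin_one, Matrix.head_fin_const, Matrix.of_apply,
        one_div] <;>
      first
        | ring1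
        | linarith [id1]
        | linarith [id2]
  -- positive semidefiniteness of N₁
  have hN1psd : (∀ᵐ ω ∂P[|ECE], π j (Z ω) + π k (Z ω) ≤ 1) → N₁.PosSemidef := by
    intro hple
    have haeP : ∀ᵐ ω ∂P[|ECE],
        0 < π j (Z ω) ∧ 0 < π k (Z ω) ∧ π j (Z ω) + π k (Z ω) ≤ 1 := by
      filter_upwards [hmem, hple] with ω h1 h2
      rw [hECE] at h1
      exact ⟨h1.1, h1.2, h2⟩
    have hk := key_ineq P[|ECE] (fun ω => π j (Z ω)) (fun ω => π k (Z ω))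
      hIntj1 hIntk1 haeP
    rw [hN₁]
    exact posSemidef_2x2 _ _ _ (fun x y => by nlinarith [hk (x * δjk) (y * δkj)])
  refine ⟨heq, hN1psd, fun hple hc1 hc2 => ?_⟩
  rw [heq]
  refine (hN1psd hple).add ?_
  rw [hN₂]
  exact posSemidef_diag2 _ _ (by linarith) (by linarith)
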